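/- Let 𝔛 be a Bourgain–Delbaen-C-ℒ_∞-space with index set Γ and Γ' ⊂ Γ a subset such that for every γ ∈ Γ there exists an interval E of ℕ_0 with e*_γ ∘ I_{Γ'} = e*_γ ∘ P_E (where I_{Γ'} is the coordinate projection onto span{d_γ : γ ∈ Γ'} and P_E the FDD interval projection). Then I_{Γ'} extends to a bounded linear projection on 𝔛 of norm at most 2C, with image the closed span 𝔛' of {d_γ : γ ∈ Γ'}. -/

import Mathlib

open scoped Classical

/-- in a Bourgain–Delbaen-`C`-`ℒ∞`-space, if for every `γ` the
functional `e*_γ ∘ I_{Γ'}` coincides with `e*_γ ∘ P_E` for some interval `E`,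
then the coordinate projection onto `Γ'` extends to a bounded projection of
norm at most `2C` with image the closed span of `{d_γ : γ ∈ Γ'}`. -/
theorem stmt_9
    {X : Type*} [NormedAddCommGroup X] [NormedSpace ℂ X] [CompleteSpace X]
    {Γ : Type*} (rank : Γ → ℕ)
    (C : ℝ) (hC : 1 ≤ C)
    (d : Γ → X) (e dstar : Γ → X →L[ℂ] ℂ)
    (hind : LinearIndependent ℂ d)
    (hdense : Dense (Submodule.span ℂ (Set.range d) : Set X))
    (hbio : ∀ γ γ' : Γ, dstar γ (d γ') = if γ = γ' then 1 else 0)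
    -- the coordinates determine the norm, as in a subspace of ℓ∞(Γ)
    (he1 : ∀ γ, ‖e γ‖ ≤ 1)
    (henorm : ∀ x : X, ‖x‖ = ⨆ γ, ‖e γ x‖)
    -- the FDD interval projections
    (P : ℕ → ℕ → X →L[ℂ] X)
    (hPnorm : ∀ l u, ‖P l u‖ ≤ 2 * C)
    (hPd : ∀ l u γ, P l u (d γ) = if l ≤ rank γ ∧ rank γ ≤ u then d γ else 0)
    (Γ' : Set Γ)
    -- for every γ there is an interval E with e*_γ ∘ I_{Γ'} = e*_γ ∘ P_E
    (hint : ∀ γ : Γ, ∃ l u : ℕ, ∀ η : Γ,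
      e γ (P l u (d η)) = if η ∈ Γ' then e γ (d η) else 0) :
    ∃ Iproj : X →L[ℂ] X,
      ‖Iproj‖ ≤ 2 * C ∧
      Iproj.comp Iproj = Iproj ∧
      (∀ η : Γ, Iproj (d η) = if η ∈ Γ' then d η else 0) ∧
      Set.range ⇑Iproj = closure (Submodule.span ℂ (d '' Γ') : Set X) := by
  have h2C : (0:ℝ) ≤ 2 * C := by linarith
  set S : Submodule ℂ X := Submodule.span ℂ (Set.range d) with hS
  -- the target vectors
  set d' : Γ → X := fun η => if η ∈ Γ' then d η else 0 with hd'
  -- the linear map on the span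
  set L : S →ₗ[ℂ] X := (Finsupp.linearCombination ℂ d') ∘ₗ hind.repr with hL
  -- L agrees with e γ ∘ P l u for the interval provided by hint
  have key : ∀ γ : Γ, ∀ x : S, ∃ l u : ℕ, e γ (L x) = e γ (P l u (x : X)) := by
    intro γ x
    obtain ⟨l, u, hlu⟩ := hint γ
    refine ⟨l, u, ?_⟩
    have hx : (x : X) = Finsupp.linearCombination ℂ d (hind.repr x) :=
      (hind.linearCombination_repr x).symm
    rw [hL]
    simp only [LinearMap.comp_apply]
    rw [hx, Finsupp.linearCombination_apply, Finsupp.linearCombination_apply,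
      map_finsuppSum, map_finsuppSum, map_finsuppSum]
    refine Finsupp.sum_congr fun η _ => ?_
    simp only [map_smul]
    congr 1
    rw [hlu η, hd']
    by_cases hη : η ∈ Γ' <;> simp [hη]
  -- the bound on the span
  have hbound : ∀ x : S, ‖L x‖ ≤ 2 * C * ‖x‖ := by
    intro x
    rw [henorm (L x)]
    refine Real.iSup_le (fun γ => ?_) (by positivity)
    obtain ⟨l, u, hlu⟩ := key γ x
    rw [hlu]
    calc ‖e γ (P l u (x : X))‖ ≤ ‖e γ‖ * ‖P l u (x : X)‖ :=
          (e γ).le_opNorm _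
      _ ≤ 1 * ‖P l u (x : X)‖ :=
          mul_le_mul_of_nonneg_right (he1 γ) (norm_nonneg _)
      _ = ‖P l u (x : X)‖ := one_mul _
      _ ≤ ‖P l u‖ * ‖(x : X)‖ := (P l u).le_opNorm _
      _ ≤ 2 * C * ‖(x : X)‖ :=
          mul_le_mul_of_nonneg_right (hPnorm l u) (norm_nonneg _)
  -- continuous version on the span
  set Lc : S →L[ℂ] X := L.mkContinuous (2 * C) hbound with hLc
  have hLcnorm : ‖Lc‖ ≤ 2 * C := L.mkContinuous_norm_le h2C hbound
  -- the inclusion of the span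
  set j : S →L[ℂ] X := S.subtypeL with hj
  have hjdense : DenseRange j := by
    rw [hj]
    have : Set.range (⇑S.subtypeL) = (S : Set X) := Subtype.range_coe
    rw [DenseRange, this]
    exact hdense
  have hjbound : ∀ x : S, ‖x‖ ≤ (1 : NNReal) * ‖j x‖ := by
    intro x; simp [hj]
  have hju : IsUniformInducing j :=
    (ContinuousLinearMap.isUniformEmbedding_of_bound j hjbound).isUniformInducing
  -- the extension
  set Iproj : X →L[ℂ] X := Lc.extend j with hI
  have hIext : ∀ x : S, Iproj (x : X) = Lc x := fun x =>
    ContinuousLinearMap.extend_eq Lc hjdense hju x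
  have hInorm : ‖Iproj‖ ≤ 2 * C := by
    have := ContinuousLinearMap.opNorm_extend_le Lc hjdense hjbound
    calc ‖Iproj‖ ≤ (1 : NNReal) * ‖Lc‖ := this
      _ = ‖Lc‖ := by simp
      _ ≤ 2 * C := hLcnorm
  -- action on the d's
  have hId : ∀ η : Γ, Iproj (d η) = if η ∈ Γ' then d η else 0 := by
    intro η
    have hmem : d η ∈ S := Submodule.subset_span ⟨η, rfl⟩
    have : Iproj (d η) = Lc ⟨d η, hmem⟩ := hIext ⟨d η, hmem⟩
    rw [this]
    have hrepr : hind.repr ⟨d η, hmem⟩ = Finsupp.single η 1 :=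
      hind.repr_eq_single η _ rfl
    show L ⟨d η, hmem⟩ = _
    rw [hL]
    simp only [LinearMap.comp_apply, hrepr, Finsupp.linearCombination_single, one_smul, hd']
  -- characterize the closure of S
  have hSclos : closure (S : Set X) = Set.univ := hdense.closure_eq
  -- agreement of two continuous maps that coincide on S extends to X
  have hext : ∀ (f g : X →L[ℂ] X), (∀ y ∈ (S : Set X), f y = g y) → f = g := by
    intro f g hfg
    apply ContinuousLinearMap.ext
    intro x
    have : Set.EqOn (⇑f) (⇑g) (S : Set X) := hfg
    exact congrFun (Continuous.ext_on hdense f.continuous g.continuous this) x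
  -- idempotency
  have hidem : Iproj.comp Iproj = Iproj := by
    apply hext
    intro y hy
    simp only [ContinuousLinearMap.comp_apply]
    refine Submodule.span_induction (p := fun y _ => Iproj (Iproj y) = Iproj y)
      ?_ ?_ ?_ ?_ hy
    · rintro _ ⟨η, rfl⟩
      rw [hId η]
      by_cases hη : η ∈ Γ' <;> simp [hη, hId η]
    · simp
    · intro a b _ _ ha hb; simp [map_add, ha, hb]
    · intro c a _ ha; simp [map_smul, ha]
  -- range
  set T : Set X := closure (Submodule.span ℂ (d '' Γ') : Set X) with hT
  have hrange : Set.range ⇑Iproj = T := by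
    apply Set.Subset.antisymm
    · rintro _ ⟨x, rfl⟩
      have hsub : (S : Set X) ⊆ ⇑Iproj ⁻¹' T := by
        intro y hy
        have : Iproj y ∈ Submodule.span ℂ (d '' Γ') := by
          refine Submodule.span_induction (p := fun y _ => Iproj y ∈ Submodule.span ℂ (d '' Γ'))
            ?_ ?_ ?_ ?_ hy
          · rintro _ ⟨η, rfl⟩
            rw [hId η]
            by_cases hη : η ∈ Γ'
            · simp only [hη, if_pos]
              exact Submodule.subset_span ⟨η, hη, rfl⟩
            · simp only [hη, if_neg, not_false_iff]
              exact (Submodule.span ℂ (d '' Γ')).zero_mem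
          · simp only [map_zero]; exact (Submodule.span ℂ (d '' Γ')).zero_mem
          · intro a b _ _ ha hb; rw [map_add]; exact Submodule.add_mem _ ha hb
          · intro c a _ ha; rw [map_smul]; exact Submodule.smul_mem _ c ha
        exact subset_closure this
      have hclosedpre : IsClosed (⇑Iproj ⁻¹' T) := isClosed_closure.preimage Iproj.continuous
      have : closure (S : Set X) ⊆ ⇑Iproj ⁻¹' T := closure_minimal hsub hclosedpre
      rw [hSclos] at this
      exact this (Set.mem_univ x)
    · -- T is contained in the fixed-point set of Iproj, which is inside the range
      have hfixclosed : IsClosed {x : X | Iproj x = x} :=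
        isClosed_eq Iproj.continuous continuous_id
      have hfix : (Submodule.span ℂ (d '' Γ') : Set X) ⊆ {x : X | Iproj x = x} := by
        intro y hy
        refine Submodule.span_induction (p := fun y _ => Iproj y = y) ?_ ?_ ?_ ?_ hy
        · rintro _ ⟨η, hη, rfl⟩
          rw [hId η]; simp [hη]
        · simp
        · intro a b _ _ ha hb; simp [map_add, ha, hb]
        · intro c a _ ha; simp [map_smul, ha]
      intro x hx
      have : Iproj x = x := closure_minimal hfix hfixclosed hx
      exact ⟨x, this⟩
  exact ⟨Iproj, hInorm, hidem, hId, hrange⟩
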